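/- Let D ∈ ℝ^{p×n}, K ∈ ℝ^{n×n} with K^T K invertible, ξ > 0, and M = D^T D + ξ^{-1} K^T K. Then T := D M^{-1} D^T satisfies (I + ξ D (K^T K)^{-1} D^T)^{-1} = I - T, and the spectrum of T lies in [0, 1 - 1/(1 + ξ‖D (K^T K)^{-1} D^T‖)]; in particular the spectral radius of T is strictly less than 1. -/

import Mathlib

open Matrix

theorem stmt_16 (p n : ℕ)
    (D : Matrix (Fin p) (Fin n) ℝ) (K : Matrix (Fin n) (Fin n) ℝ)
    (hK : IsUnit (Kᵀ * K)) (ξ : ℝ) (hξ : 0 < ξ)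
    (M : Matrix (Fin n) (Fin n) ℝ) (hM : M = Dᵀ * D + ξ⁻¹ • (Kᵀ * K))
    (T : Matrix (Fin p) (Fin p) ℝ) (hT : T = D * M⁻¹ * Dᵀ) :
    (1 + ξ • (D * (Kᵀ * K)⁻¹ * Dᵀ))⁻¹ = 1 - T ∧
      spectrum ℝ T ⊆ Set.Icc 0
        (1 - 1 / (1 + ξ * ‖Matrix.toEuclideanCLM (𝕜 := ℝ) (D * (Kᵀ * K)⁻¹ * Dᵀ)‖)) ∧
      spectralRadius ℝ T < 1 := by
  classical
  set A : Matrix (Fin n) (Fin n) ℝ := Kᵀ * K with hA_def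
  set B : Matrix (Fin p) (Fin p) ℝ := D * A⁻¹ * Dᵀ with hB_def
  -- A is positive definite
  have hA_psd : A.PosSemidef := by
    have := Matrix.posSemidef_conjTranspose_mul_self K
    rwa [Matrix.conjTranspose_eq_transpose_of_trivial] at this
  have hA_pd : A.PosDef := by
    rw [Matrix.posDef_iff_dotProduct_mulVec]
    refine ⟨hA_psd.isHermitian, fun x hx => ?_⟩
    rcases ((Matrix.posSemidef_iff_dotProduct_mulVec.mp hA_psd).2 x).lt_or_eq with h | h
    · exact h
    · exfalso
      have hd : (K *ᵥ x) ⬝ᵥ (K *ᵥ x) = 0 := by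
        have : star x ⬝ᵥ (A *ᵥ x) = (K *ᵥ x) ⬝ᵥ (K *ᵥ x) := by
          rw [hA_def, ← Matrix.mulVec_mulVec, Matrix.dotProduct_mulVec,
            Matrix.vecMul_transpose]
          simp
        rw [← this, ← h]
      have hKx : K *ᵥ x = 0 := by
        simpa using (dotProduct_self_eq_zero (v := K *ᵥ x)).mp hd
      have hAx : A *ᵥ x = 0 := by
        rw [hA_def, ← Matrix.mulVec_mulVec, hKx, Matrix.mulVec_zero]
      have hdet : IsUnit A.det := (Matrix.isUnit_iff_isUnit_det _).mp hK
      have : x = 0 := by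
        have := congrArg (fun v => A⁻¹ *ᵥ v) hAx
        simpa [Matrix.mulVec_mulVec, Matrix.nonsing_inv_mul _ hdet] using this
      exact hx this
  have hAdet : IsUnit A.det := (Matrix.isUnit_iff_isUnit_det _).mp hK
  have hAl : A⁻¹ * A = 1 := Matrix.nonsing_inv_mul A hAdet
  -- M is positive definite, hence invertible
  have hDtD : (Dᵀ * D).PosSemidef := by
    have := Matrix.posSemidef_conjTranspose_mul_self D
    rwa [Matrix.conjTranspose_eq_transpose_of_trivial] at this
  have hsmul : (ξ⁻¹ • A).PosDef := by
    rw [Matrix.posDef_iff_dotProduct_mulVec]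
    refine ⟨?_, fun x hx => ?_⟩
    · unfold Matrix.IsHermitian
      rw [Matrix.conjTranspose_smul, hA_pd.isHermitian.eq]
      simp
    · rw [Matrix.smul_mulVec, dotProduct_smul]
      exact mul_pos (inv_pos.mpr hξ) ((Matrix.posDef_iff_dotProduct_mulVec.mp hA_pd).2 hx)
  have hMpd : M.PosDef := by rw [hM]; exact Matrix.PosDef.posSemidef_add hDtD hsmul
  have hMdet : IsUnit M.det := (Matrix.isUnit_iff_isUnit_det _).mp hMpd.isUnit
  have hMr : M * M⁻¹ = 1 := Matrix.mul_nonsing_inv M hMdet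
  -- the Woodbury-style identity
  have key : (1 + ξ • B) * (1 - T) = 1 := by
    have e1 : ξ • B = T + ξ • (B * T) := by
      have h1 : A⁻¹ * M = A⁻¹ * (Dᵀ * D) + ξ⁻¹ • (1 : Matrix (Fin n) (Fin n) ℝ) := by
        rw [hM, mul_add, Matrix.mul_smul, hAl]
      have h2 : D * A⁻¹ * Dᵀ = D * (A⁻¹ * M) * (M⁻¹ * Dᵀ) := by
        simp only [Matrix.mul_assoc]
        rw [← Matrix.mul_assoc M M⁻¹ Dᵀ, hMr, Matrix.one_mul]
      rw [hB_def, hT]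
      nth_rewrite 1 [h2]
      rw [h1, Matrix.mul_add, Matrix.add_mul, Matrix.mul_smul, Matrix.mul_one,
        Matrix.smul_mul, smul_add, smul_smul, mul_inv_cancel₀ hξ.ne', one_smul]
      rw [add_comm]
      simp only [Matrix.mul_assoc]
    have e2 : (1 + ξ • B) * (1 - T) = 1 - T + (ξ • B - ξ • (B * T)) := by
      rw [Matrix.add_mul, Matrix.one_mul, Matrix.mul_sub, Matrix.mul_one, Matrix.smul_mul]
      try abel
    rw [e2, e1]
    try abel
  have key' : (1 - T) * (1 + ξ • B) = 1 := mul_eq_one_comm.mp key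
  have first : (1 + ξ • B)⁻¹ = 1 - T := Matrix.inv_eq_right_inv key
  -- the unit for 1 + ξ • B
  set u : (Matrix (Fin p) (Fin p) ℝ)ˣ := ⟨1 + ξ • B, 1 - T, key, key'⟩ with hu_def
  set c : ℝ := ‖Matrix.toEuclideanCLM (𝕜 := ℝ) B‖ with hc_def
  have hc0 : 0 ≤ c := norm_nonneg _
  have hdenom : (0:ℝ) < 1 + ξ * c := by nlinarith
  have hB_psd : B.PosSemidef := by
    have := (hA_pd.inv.posSemidef).mul_mul_conjTranspose_same D
    rwa [Matrix.conjTranspose_eq_transpose_of_trivial] at this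
  -- the spectrum inclusion
  have hsub : spectrum ℝ T ⊆ Set.Icc 0 (1 - 1 / (1 + ξ * c)) := by
    intro μ hμ
    by_cases hp : p = 0
    · exfalso
      subst hp
      have : IsUnit ((algebraMap ℝ (Matrix (Fin 0) (Fin 0) ℝ)) μ - T) :=
        isUnit_of_subsingleton _
      exact (spectrum.mem_iff.mp hμ) this
    · haveI : NeZero p := ⟨hp⟩
      haveI : Nonempty (Fin p) := Fin.pos_iff_nonempty.mp (Nat.pos_of_ne_zero hp)
      haveI : Nontrivial (EuclideanSpace ℝ (Fin p)) := inferInstance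
      -- rewrite T as 1 - (1 + ξ • B)⁻¹
      have hT' : T = 1 - (1 + ξ • B)⁻¹ := by rw [first]; try abel
      have hμ' : μ ∈ spectrum ℝ ((1 : Matrix (Fin p) (Fin p) ℝ) - (1 + ξ • B)⁻¹) := by
        rwa [← hT']
      have h1μ : ∃ ν ∈ spectrum ℝ ((1 + ξ • B)⁻¹), (1:ℝ) - ν = μ := by
        have hs := spectrum.singleton_sub_eq ((1 + ξ • B)⁻¹) (1:ℝ)
        rw [_root_.map_one] at hs
        rw [← hs] at hμ'
        obtain ⟨a, ha, b, hb, hab⟩ := hμ'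
        rcases Set.mem_singleton_iff.mp ha with rfl
        exact ⟨b, hb, hab⟩
      obtain ⟨ν, hν, hμν⟩ := h1μ
      -- ν ≠ 0 since (1 + ξ • B)⁻¹ is a unit
      have hSinv_unit : IsUnit ((1 + ξ • B)⁻¹) := by
        rw [first]; exact ⟨⟨1 - T, 1 + ξ • B, key', key⟩, rfl⟩
      have hν0 : ν ≠ 0 := by
        rintro rfl
        exact (spectrum.zero_mem_iff ℝ).mp hν hSinv_unit
      -- ν⁻¹ ∈ spectrum (1 + ξ • B)
      have hucoe : ((u⁻¹ : (Matrix (Fin p) (Fin p) ℝ)ˣ) : Matrix (Fin p) (Fin p) ℝ)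
          = (1 + ξ • B)⁻¹ := by rw [first]; rfl
      have hνinv : ν⁻¹ ∈ spectrum ℝ ((1 + ξ • B) : Matrix (Fin p) (Fin p) ℝ) := by
        have h2 : (ν : ℝ) ∈ spectrum ℝ ((u⁻¹ : (Matrix (Fin p) (Fin p) ℝ)ˣ) :
            Matrix (Fin p) (Fin p) ℝ) := by rw [hucoe]; exact hν
        exact (spectrum.inv_mem_iff (r := Units.mk0 ν⁻¹ (inv_ne_zero hν0)) (a := u)).mpr
          (by rw [Units.val_inv_eq_inv_val, Units.val_mk0, inv_inv]; exact h2)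
      -- decompose ν⁻¹ = 1 + ξ * lam with lam ∈ spectrum B
      have hdecomp : ∃ lam ∈ spectrum ℝ B, ν⁻¹ = 1 + ξ * lam := by
        have hs := spectrum.singleton_add_eq (ξ • B) (1:ℝ)
        rw [_root_.map_one] at hs
        rw [← hs] at hνinv
        obtain ⟨a, ha, b, hb, hab⟩ := hνinv
        rcases Set.mem_singleton_iff.mp ha with rfl
        refine ⟨ξ⁻¹ * b, ?_, ?_⟩
        · refine (spectrum.smul_mem_smul_iff (a := B) (s := ξ⁻¹ * b)
            (r := Units.mk0 ξ hξ.ne')).mp ?_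
          simpa [Units.smul_def, smul_eq_mul, mul_inv_cancel_left₀ hξ.ne'] using hb
        · rw [← hab, mul_inv_cancel_left₀ hξ.ne']
      obtain ⟨lam, hlam, hνlam⟩ := hdecomp
      -- lam is nonnegative and bounded by c
      have hlam0 : 0 ≤ lam := by
        rw [Matrix.IsHermitian.spectrum_real_eq_range_eigenvalues hB_psd.isHermitian] at hlam
        obtain ⟨i, rfl⟩ := hlam
        exact hB_psd.eigenvalues_nonneg i
      have hlamc : lam ≤ c := by
        have : lam ∈ spectrum ℝ (Matrix.toEuclideanCLM (𝕜 := ℝ) B) := by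
          rwa [AlgEquiv.spectrum_eq]
        have := spectrum.norm_le_norm_of_mem this
        calc lam ≤ |lam| := le_abs_self _
          _ ≤ c := by rwa [Real.norm_eq_abs] at this
      -- now finish by arithmetic
      have hd1 : (0:ℝ) < 1 + ξ * lam := by nlinarith
      have hνval : ν = (1 + ξ * lam)⁻¹ := by
        rw [← inv_inv ν, hνlam]
      have hμval : μ = 1 - (1 + ξ * lam)⁻¹ := by rw [← hμν, hνval]
      constructor
      · rw [hμval]
        have : (1 + ξ * lam)⁻¹ ≤ 1 := by
          rw [inv_le_one_iff₀]
          right; nlinarith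
        linarith
      · rw [hμval, one_div]
        have h2 : (1 + ξ * c)⁻¹ ≤ (1 + ξ * lam)⁻¹ := by
          apply inv_anti₀ hd1
          nlinarith
        linarith
  refine ⟨by rw [first], hsub, ?_⟩
  -- spectral radius bound
  have hboundlt : 1 - 1 / (1 + ξ * c) < 1 := by
    have : 0 < 1 / (1 + ξ * c) := by positivity
    linarith
  have hbound0 : 0 ≤ 1 - 1 / (1 + ξ * c) := by
    have : 1 / (1 + ξ * c) ≤ 1 := by
      rw [div_le_one hdenom]; nlinarith
    linarith
  calc spectralRadius ℝ T ≤ ENNReal.ofReal (1 - 1 / (1 + ξ * c)) := by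
        refine iSup₂_le fun k hk => ?_
        obtain ⟨hk0, hk1⟩ := hsub hk
        rw [← enorm_eq_nnnorm, ← ofReal_norm]
        exact ENNReal.ofReal_le_ofReal (by rwa [Real.norm_eq_abs, abs_of_nonneg hk0])
    _ < 1 := by
        rw [← ENNReal.ofReal_one]
        exact (ENNReal.ofReal_lt_ofReal_iff one_pos).mpr hboundlt
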